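/- Let D=(V,A) be a directed acyclic graph with single source s where every node is reachable from s, and let T ⊆ V∖{s}. The inclusion-wise maximal 1-sets (sets X with s ∉ X, ϱ(X)=1) that contain at least one node of T are pairwise disjoint, and consequently their arc-neighborhoods I(Z_i) (arcs with head or tail in Z_i) are pairwise disjoint. -/
import Mathlib


/-- Number of arcs of `A` entering the vertex set `X`. -/
def inDeg {V : Type*} [DecidableEq V] (A : Finset (V × V)) (X : Finset V) : ℕ :=
  (A.filter (fun a => a.1 ∉ X ∧ a.2 ∈ X)).card

/-- A directed `u→v` path. -/
def IsPath {V : Type*} (A : Finset (V × V)) (u v : V) (l : List (V × V)) : Prop :=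
  l ≠ [] ∧ (∀ a ∈ l, a ∈ A) ∧ l.head?.map Prod.fst = some u ∧
    l.getLast?.map Prod.snd = some v ∧ l.Chain' (fun a b => a.2 = b.1)

/-- `v` is reachable from `s` using arcs of `A`. -/
def Reach {V : Type*} (A : Finset (V × V)) (s v : V) : Prop :=
  s = v ∨ ∃ l, IsPath A s v l

/-- `X` is an inclusion-wise maximal `1`-set: `s ∉ X`, `ϱ(X) = 1`, and `X` is not
properly contained in any other such set. -/
def IsMaxOneSet {V : Type*} [DecidableEq V] (A : Finset (V × V)) (s : V)
    (X : Finset V) : Prop :=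
  s ∉ X ∧ inDeg A X = 1 ∧
    ∀ Y : Finset V, s ∉ Y → inDeg A Y = 1 → X ⊆ Y → X = Y

/-- `I(Z)`: the arcs with head or tail in `Z`. -/
def arcNbhd {V : Type*} [DecidableEq V] (A : Finset (V × V)) (Z : Finset V) :
    Finset (V × V) :=
  A.filter (fun a => a.1 ∈ Z ∨ a.2 ∈ Z)


lemma exists_cross {V : Type*} [DecidableEq V] (X : Finset V) :
    ∀ (l : List (V × V)) (u v : V),
      l.head?.map Prod.fst = some u → l.getLast?.map Prod.snd = some v →
      l.Chain' (fun a b => a.2 = b.1) → u ∉ X → v ∈ X →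
      ∃ a ∈ l, a.1 ∉ X ∧ a.2 ∈ X := by
  intro l
  induction l with
  | nil => simp
  | cons a tl ih =>
    intro u v hh hl hc hu hv
    simp only [List.head?_cons, Option.map_some] at hh
    have hau : a.1 = u := by injection hh
    cases tl with
    | nil =>
      simp only [List.getLast?_singleton, Option.map_some] at hl
      have : a.2 = v := by injection hl
      exact ⟨a, by simp, hau ▸ hu, this ▸ hv⟩
    | cons b tl' =>
      have hab : a.2 = b.1 := (List.isChain_cons_cons.mp hc).1
      by_cases h2 : a.2 ∈ X
      · exact ⟨a, by simp, hau ▸ hu, h2⟩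
      · have hl' : (b :: tl').getLast?.map Prod.snd = some v := by
          rwa [List.getLast?_cons_cons] at hl
        obtain ⟨c, hc1, hc2⟩ := ih b.1 v (by simp) hl'
          (List.isChain_cons_cons.mp hc).2 (hab ▸ h2) hv
        exact ⟨c, List.mem_cons_of_mem _ hc1, hc2⟩

lemma inDeg_pos {V : Type*} [DecidableEq V] (A : Finset (V × V)) (s : V)
    (hreach : ∀ v, Reach A s v) (X : Finset V) (hs : s ∉ X) (hX : X.Nonempty) :
    1 ≤ inDeg A X := by
  obtain ⟨v, hv⟩ := hX
  rcases hreach v with h | ⟨l, hl⟩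
  · exact absurd (h ▸ hv) hs
  · obtain ⟨a, ha, h1, h2⟩ := exists_cross X l s v hl.2.2.1 hl.2.2.2.1 hl.2.2.2.2 hs hv
    exact Finset.card_pos.2 ⟨a, Finset.mem_filter.2 ⟨hl.2.1 a ha, h1, h2⟩⟩

lemma inDeg_submod {V : Type*} [DecidableEq V] (A : Finset (V × V)) (X Y : Finset V) :
    inDeg A (X ∪ Y) + inDeg A (X ∩ Y) ≤ inDeg A X + inDeg A Y := by
  classical
  unfold inDeg
  set P := A.filter (fun a => a.1 ∉ X ∪ Y ∧ a.2 ∈ X ∪ Y) with hP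
  set Q := A.filter (fun a => a.1 ∉ X ∩ Y ∧ a.2 ∈ X ∩ Y) with hQ
  set R := A.filter (fun a => a.1 ∉ X ∧ a.2 ∈ X) with hR
  set S := A.filter (fun a => a.1 ∉ Y ∧ a.2 ∈ Y) with hS
  have h1 : P ∪ Q ⊆ R ∪ S := by
    intro a ha
    simp only [hP, hQ, hR, hS, Finset.mem_union, Finset.mem_inter, Finset.mem_filter] at *
    tauto
  have h2 : P ∩ Q ⊆ R ∩ S := by
    intro a ha
    simp only [hP, hQ, hR, hS, Finset.mem_union, Finset.mem_inter, Finset.mem_filter] at *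
    tauto
  calc P.card + Q.card = (P ∪ Q).card + (P ∩ Q).card :=
        (Finset.card_union_add_card_inter P Q).symm
    _ ≤ (R ∪ S).card + (R ∩ S).card :=
        Nat.add_le_add (Finset.card_le_card h1) (Finset.card_le_card h2)
    _ = R.card + S.card := Finset.card_union_add_card_inter R S

/-- In a DAG with single source `s` from which every node is reachable, the
maximal `1`-sets containing a node of `T` are pairwise disjoint, and so are
their arc-neighborhoods `I(Z₁)`, `I(Z₂)`. -/
theorem maxOneSets_pairwise_disjoint {V : Type*} [DecidableEq V]
    (A : Finset (V × V)) (s : V) (T : Finset V) (hsT : s ∉ T)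
    (ord : V → ℕ) (hord : ∀ a ∈ A, ord a.1 < ord a.2)
    (hreach : ∀ v : V, Reach A s v)
    (Z₁ Z₂ : Finset V) (h1 : IsMaxOneSet A s Z₁) (h2 : IsMaxOneSet A s Z₂)
    (ht1 : ∃ t ∈ T, t ∈ Z₁) (ht2 : ∃ t ∈ T, t ∈ Z₂) (hne : Z₁ ≠ Z₂) :
    Disjoint Z₁ Z₂ ∧ Disjoint (arcNbhd A Z₁) (arcNbhd A Z₂) := by
  obtain ⟨hs1, hd1, hm1⟩ := h1
  obtain ⟨hs2, hd2, hm2⟩ := h2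
  obtain ⟨t1, _, ht1'⟩ := ht1
  obtain ⟨t2, _, ht2'⟩ := ht2
  have hsU : s ∉ Z₁ ∪ Z₂ := by simp [hs1, hs2]
  -- vertex disjointness
  have hdisj : Disjoint Z₁ Z₂ := by
    rw [Finset.disjoint_left]
    intro x hx1 hx2
    have hI : 1 ≤ inDeg A (Z₁ ∩ Z₂) :=
      inDeg_pos A s hreach _ (fun h => hs1 (Finset.mem_inter.mp h).1)
        ⟨x, Finset.mem_inter.2 ⟨hx1, hx2⟩⟩
    have hU : 1 ≤ inDeg A (Z₁ ∪ Z₂) :=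
      inDeg_pos A s hreach _ hsU ⟨x, Finset.mem_union_left _ hx1⟩
    have hsub := inDeg_submod A Z₁ Z₂
    rw [hd1, hd2] at hsub
    have hU1 : inDeg A (Z₁ ∪ Z₂) = 1 := by omega
    have e1 : Z₁ = Z₁ ∪ Z₂ := hm1 _ hsU hU1 Finset.subset_union_left
    have e2 : Z₂ = Z₁ ∪ Z₂ := hm2 _ hsU hU1 Finset.subset_union_right
    exact hne (e1.trans e2.symm)
  -- no crossing arcs
  have hcross : ∀ (X Y : Finset V), s ∉ X → s ∉ Y → inDeg A X = 1 → inDeg A Y = 1 →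
      (∀ W : Finset V, s ∉ W → inDeg A W = 1 → X ⊆ W → X = W) →
      Disjoint X Y → Y.Nonempty →
      ∀ a ∈ A, a.1 ∈ X → a.2 ∉ Y := by
    intro X Y hsX hsY hdX hdY hmX hXY hYne a haA ha1 ha2
    have hsUW : s ∉ X ∪ Y := by simp [hsX, hsY]
    -- entering arcs of the union are contained in entering arcs of X
    have hsubE : A.filter (fun b => b.1 ∉ X ∪ Y ∧ b.2 ∈ X ∪ Y) ⊆
        A.filter (fun b => b.1 ∉ X ∧ b.2 ∈ X) := by
      intro b hb
      rw [Finset.mem_filter] at hb ⊢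
      obtain ⟨hbA, hb1, hb2⟩ := hb
      rw [Finset.mem_union] at hb1 hb2
      push_neg at hb1
      rcases hb2 with hb2 | hb2
      · exact ⟨hbA, hb1.1, hb2⟩
      · -- b enters Y, but so does a, and Y has exactly one entering arc
        exfalso
        have hbY : b ∈ A.filter (fun c => c.1 ∉ Y ∧ c.2 ∈ Y) :=
          Finset.mem_filter.2 ⟨hbA, hb1.2, hb2⟩
        have haY : a ∈ A.filter (fun c => c.1 ∉ Y ∧ c.2 ∈ Y) :=
          Finset.mem_filter.2 ⟨haA, Finset.disjoint_left.mp hXY ha1, ha2⟩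
        have : b = a := Finset.card_le_one.mp (le_of_eq hdY) b hbY a haY
        exact hb1.1 (this ▸ ha1)
    obtain ⟨y, hy⟩ := hYne
    have hUpos : 1 ≤ inDeg A (X ∪ Y) :=
      inDeg_pos A s hreach _ hsUW ⟨y, Finset.mem_union_right _ hy⟩
    have hUle : inDeg A (X ∪ Y) ≤ 1 := hdX ▸ Finset.card_le_card hsubE
    have e1 : X = X ∪ Y := hmX _ hsUW (le_antisymm hUle hUpos) Finset.subset_union_left
    exact Finset.disjoint_left.mp hXY (e1 ▸ Finset.mem_union_right X hy) hy
  have hc12 := hcross Z₁ Z₂ hs1 hs2 hd1 hd2 hm1 hdisj ⟨t2, ht2'⟩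
  have hc21 := hcross Z₂ Z₁ hs2 hs1 hd2 hd1 hm2 hdisj.symm ⟨t1, ht1'⟩
  refine ⟨hdisj, ?_⟩
  rw [Finset.disjoint_left]
  intro a ha1 ha2
  rw [arcNbhd, Finset.mem_filter] at ha1 ha2
  obtain ⟨haA, hA1⟩ := ha1
  obtain ⟨-, hA2⟩ := ha2
  have hD := Finset.disjoint_left.mp hdisj
  rcases hA1 with h | h <;> rcases hA2 with h' | h'
  · exact hD h h'
  · exact hc12 a haA h h'
  · exact hc21 a haA h' h
  · exact hD h h'
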